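/- Let P be a finite set and Λ = (λ_p)_{p∈P} strictly positive probabilities. For the Bernoulli product measure μ_Λ on P^ℕ and any two distinct symbols a, b ∈ P with λ_a > λ_b, the set of sequences x such that for all n, #{k ≤ n : x_k = a} > #{k ≤ n : x_k = b} has positive μ_Λ-measure. -/

import Mathlib

open scoped Classical
open MeasureTheory Finset

namespace Stmt5Aux

variable {P : Type*}

/-- extend a finite word by `a`'s -/
noncomputable def ex (a : P) (n : ℕ) (w : Fin n → P) : ℕ → P :=
  fun i => if h : i < n then w ⟨i, h⟩ else a

noncomputable def cnt (c : P) (n : ℕ) (x : ℕ → P) : ℕ :=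
  ((Finset.range n).filter (fun k => x k = c)).card

def good (a b : P) (n : ℕ) (x : ℕ → P) : Prop :=
  ∀ m, m < n → cnt b (m + 1) x < cnt a (m + 1) x

noncomputable def W [Fintype P] (Λ : P → ℝ) (n : ℕ) (w : Fin n → P) : ℝ :=
  ∏ i, Λ (w i)

noncomputable def ht (a b : P) (n : ℕ) (x : ℕ → P) : ℕ := cnt a n x - cnt b n x

noncomputable def G [Fintype P] (Λ : P → ℝ) (a b : P) (n : ℕ) : ℝ :=
  ∑ w : Fin n → P, if good a b n (ex a n w) then W Λ n w else 0

noncomputable def GH [Fintype P] (Λ : P → ℝ) (a b : P) (n : ℕ) : ℝ :=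
  ∑ w : Fin n → P,
    if good a b n (ex a n w) then
      W Λ n w * (1 - (Λ b / Λ a) ^ ht a b n (ex a n w)) else 0

lemma cnt_congr {x y : ℕ → P} {n : ℕ} (h : ∀ i, i < n → x i = y i) (c : P) :
    cnt c n x = cnt c n y := by
  unfold cnt
  congr 1
  apply Finset.filter_congr
  intro k hk
  rw [h k (Finset.mem_range.mp hk)]

lemma cnt_succ (c : P) (n : ℕ) (x : ℕ → P) :
    cnt c (n + 1) x = cnt c n x + (if x n = c then 1 else 0) := by
  unfold cnt
  rw [Finset.range_add_one, Finset.filter_insert]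
  split
  · rw [Finset.card_insert_of_notMem (by simp)]
  · simp

lemma cnt_zero (c : P) (x : ℕ → P) : cnt c 0 x = 0 := by simp [cnt]

lemma good_succ (a b : P) (n : ℕ) (x : ℕ → P) :
    good a b (n + 1) x ↔ good a b n x ∧ cnt b (n + 1) x < cnt a (n + 1) x := by
  constructor
  · intro h; exact ⟨fun m hm => h m (by omega), h n (by omega)⟩
  · rintro ⟨h1, h2⟩ m hm
    rcases Nat.lt_or_ge m n with hm' | hm'
    · exact h1 m hm'
    · have : m = n := by omega
      subst this; exact h2

lemma ex_lt (a : P) {n i : ℕ} (w : Fin n → P) (h : i < n) :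
    ex a n w i = w ⟨i, h⟩ := dif_pos h

lemma ex_snoc_lt (a c : P) {n : ℕ} (u : Fin n → P) {i : ℕ} (h : i < n) :
    ex a (n + 1) (Fin.snoc u c) i = ex a n u i := by
  rw [ex_lt a _ (by omega : i < n + 1), ex_lt a u h]
  have : (⟨i, by omega⟩ : Fin (n + 1)) = Fin.castSucc ⟨i, h⟩ := rfl
  rw [this, Fin.snoc_castSucc]

lemma ex_snoc_last (a c : P) {n : ℕ} (u : Fin n → P) :
    ex a (n + 1) (Fin.snoc u c) n = c := by
  rw [ex_lt a _ (by omega : n < n + 1)]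
  have : (⟨n, by omega⟩ : Fin (n + 1)) = Fin.last n := rfl
  rw [this, Fin.snoc_last]

/-- snoc equivalence for sums over words -/
noncomputable def snocEquiv (P : Type*) (n : ℕ) : (Fin n → P) × P ≃ (Fin (n + 1) → P) where
  toFun p := Fin.snoc p.1 p.2
  invFun w := (Fin.init w, w (Fin.last n))
  left_inv p := by
    ext i
    · simp [Fin.init_snoc]
    · simp [Fin.snoc_last]
  right_inv w := Fin.snoc_init_self w

lemma sum_snoc [Fintype P] {M : Type*} [AddCommMonoid M] (n : ℕ)
    (f : (Fin (n + 1) → P) → M) :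
    ∑ w : Fin (n + 1) → P, f w = ∑ u : Fin n → P, ∑ c : P, f (Fin.snoc u c) := by
  rw [← (snocEquiv P n).sum_comp f]
  rw [Fintype.sum_prod_type]
  rfl

lemma W_snoc [Fintype P] (Λ : P → ℝ) (n : ℕ) (u : Fin n → P) (c : P) :
    W Λ (n + 1) (Fin.snoc u c) = W Λ n u * Λ c := by
  unfold W
  rw [Fin.prod_univ_castSucc]
  simp [Fin.snoc_castSucc, Fin.snoc_last]

lemma sum_W_eq_one [Fintype P] (Λ : P → ℝ) (hsum : ∑ p, Λ p = 1) (n : ℕ) :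
    ∑ w : Fin n → P, W Λ n w = 1 := by
  induction n with
  | zero =>
      rw [Fintype.sum_unique]
      simp [W]
  | succ n ih =>
      rw [sum_snoc]
      have : ∀ u : Fin n → P, ∑ c : P, W Λ (n + 1) (Fin.snoc u c) = W Λ n u := by
        intro u
        simp_rw [W_snoc, ← Finset.mul_sum, hsum, mul_one]
      simp_rw [this, ih]


lemma id1 (p q r : ℝ) (hp : 0 < p) (hsum : p + q + r = 1) :
    p * (1 - (q / p) ^ 2) + r * (1 - (q / p)) = 1 - (q / p) := by
  have hr : r = 1 - p - q := by linarith
  subst hr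
  field_simp
  ring

lemma id2 (p q r : ℝ) (hp : 0 < p) (hsum : p + q + r = 1) (j : ℕ) :
    p * (1 - (q / p) ^ (j + 3)) + q * (1 - (q / p) ^ (j + 1)) + r * (1 - (q / p) ^ (j + 2))
      = 1 - (q / p) ^ (j + 2) := by
  have hr : r = 1 - p - q := by linarith
  subst hr
  have h1 : (q / p) ^ (j + 1) = (q / p) ^ j * (q / p) := pow_succ _ _
  have h2 : (q / p) ^ (j + 2) = (q / p) ^ j * (q / p) ^ 2 := pow_add _ _ _
  have h3 : (q / p) ^ (j + 3) = (q / p) ^ j * (q / p) ^ 3 := pow_add _ _ _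
  rw [h1, h2, h3]
  field_simp
  ring

section Core
variable [Fintype P] (Λ : P → ℝ)

lemma GH_one (hpos : ∀ p, 0 < Λ p) (a b : P) (hab : a ≠ b) :
    GH Λ a b 1 = Λ a - Λ b := by
  rw [GH, sum_snoc 0, Fintype.sum_unique]
  have key : ∀ c : P,
      (if good a b 1 (ex a 1 (Fin.snoc default c)) then
        W Λ 1 (Fin.snoc default c) *
          (1 - (Λ b / Λ a) ^ ht a b 1 (ex a 1 (Fin.snoc default c))) else 0)
      = (if c = a then Λ c * (1 - Λ b / Λ a) else 0) := by
    intro c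
    have hy0 : ex a 1 (Fin.snoc (default : Fin 0 → P) c) 0 = c := ex_snoc_last a c default
    have hca : cnt a 1 (ex a 1 (Fin.snoc (default : Fin 0 → P) c)) = if c = a then 1 else 0 := by
      rw [cnt_succ, cnt_zero, hy0]; simp
    have hcb : cnt b 1 (ex a 1 (Fin.snoc (default : Fin 0 → P) c)) = if c = b then 1 else 0 := by
      rw [cnt_succ, cnt_zero, hy0]; simp
    have hgood : good a b 1 (ex a 1 (Fin.snoc (default : Fin 0 → P) c)) ↔ c = a := by
      constructor
      · intro h
        have := h 0 (by omega)
        rw [hca, hcb] at this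
        by_contra hc
        simp [hc] at this
      · intro h m hm
        have : m = 0 := by omega
        subst this
        rw [hca, hcb, if_pos h, if_neg (by rw [h]; exact hab)]
        omega
    have hW : W Λ 1 (Fin.snoc (default : Fin 0 → P) c) = Λ c := by
      rw [W_snoc]
      simp [W]
    by_cases hc : c = a
    · rw [if_pos (hgood.mpr hc), if_pos hc, hW]
      have hht : ht a b 1 (ex a 1 (Fin.snoc (default : Fin 0 → P) c)) = 1 := by
        rw [ht, hca, hcb, if_pos hc, if_neg (by rw [hc]; exact hab)]
      rw [hht, pow_one]
    · rw [if_neg (fun h => hc (hgood.mp h)), if_neg hc]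
  rw [Finset.sum_congr rfl (fun c _ => key c), Finset.sum_ite_eq' Finset.univ a
    (fun c => Λ c * (1 - Λ b / Λ a)), if_pos (Finset.mem_univ a)]
  have hpa := hpos a
  field_simp

lemma GH_succ (hpos : ∀ p, 0 < Λ p) (hsum : ∑ p, Λ p = 1) (a b : P) (hab : a ≠ b) (n : ℕ) :
    GH Λ a b (n + 2) = GH Λ a b (n + 1) := by
  rw [GH, GH, sum_snoc (n + 1)]
  apply Finset.sum_congr rfl
  intro u _
  have hagree : ∀ (c : P) (m : ℕ), m ≤ n + 1 → ∀ c' : P,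
      cnt c' m (ex a (n + 2) (Fin.snoc u c)) = cnt c' m (ex a (n + 1) u) := by
    intro c m hm c'
    exact cnt_congr (fun i hi => ex_snoc_lt a c u (by omega)) c'
  by_cases hg : good a b (n + 1) (ex a (n + 1) u)
  swap
  · have hz : ∀ c : P, ¬ good a b (n + 2) (ex a (n + 2) (Fin.snoc u c)) := by
      intro c hcontra
      apply hg
      intro m hm
      rw [← hagree c (m + 1) (by omega) a, ← hagree c (m + 1) (by omega) b]
      exact hcontra m (by omega)
    rw [if_neg hg]
    rw [Finset.sum_congr rfl (fun c _ => if_neg (hz c))]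
    simp
  · set ca := cnt a (n + 1) (ex a (n + 1) u) with hca0
    set cb := cnt b (n + 1) (ex a (n + 1) u) with hcb0
    have hk : cb < ca := hg n (by omega)
    have hterm : ∀ c : P,
        (if good a b (n + 2) (ex a (n + 2) (Fin.snoc u c)) then
          W Λ (n + 2) (Fin.snoc u c) *
            (1 - (Λ b / Λ a) ^ ht a b (n + 2) (ex a (n + 2) (Fin.snoc u c))) else 0)
        = (if cb + (if c = b then 1 else 0) < ca + (if c = a then 1 else 0) then
            W Λ (n + 1) u * Λ c *
              (1 - (Λ b / Λ a) ^ ((ca + (if c = a then 1 else 0)) - (cb + (if c = b then 1 else 0))))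
          else 0) := by
      intro c
      have hlast : ex a (n + 2) (Fin.snoc u c) (n + 1) = c := ex_snoc_last a c u
      have hcA : cnt a (n + 2) (ex a (n + 2) (Fin.snoc u c)) = ca + (if c = a then 1 else 0) := by
        rw [cnt_succ, hagree c (n + 1) (le_refl _) a, hlast]
      have hcB : cnt b (n + 2) (ex a (n + 2) (Fin.snoc u c)) = cb + (if c = b then 1 else 0) := by
        rw [cnt_succ, hagree c (n + 1) (le_refl _) b, hlast]
      have hgood : good a b (n + 2) (ex a (n + 2) (Fin.snoc u c)) ↔
          cb + (if c = b then 1 else 0) < ca + (if c = a then 1 else 0) := by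
        rw [good_succ, hcA, hcB]
        constructor
        · exact fun h => h.2
        · intro h
          refine ⟨fun m hm => ?_, h⟩
          rw [hagree c (m + 1) (by omega) a, hagree c (m + 1) (by omega) b]
          exact hg m hm
      rw [ht, hcA, hcB, W_snoc]
      exact if_congr hgood rfl rfl
    rw [Finset.sum_congr rfl (fun c _ => hterm c)]
    -- split the sum into a, b, and the rest
    set f : P → ℝ := fun c =>
      if cb + (if c = b then 1 else 0) < ca + (if c = a then 1 else 0) then
        W Λ (n + 1) u * Λ c *
          (1 - (Λ b / Λ a) ^ ((ca + (if c = a then 1 else 0)) - (cb + (if c = b then 1 else 0))))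
      else 0 with hf
    have hbmem : b ∈ Finset.univ.erase a := Finset.mem_erase.mpr ⟨fun h => hab h.symm, Finset.mem_univ b⟩
    have hsplit : ∑ c : P, f c = f a + (f b + ∑ c ∈ (Finset.univ.erase a).erase b, f c) := by
      rw [Finset.add_sum_erase _ f hbmem, Finset.add_sum_erase _ f (Finset.mem_univ a)]
    have hΛsplit : Λ a + (Λ b + ∑ c ∈ (Finset.univ.erase a).erase b, Λ c) = 1 := by
      rw [Finset.add_sum_erase _ Λ hbmem, Finset.add_sum_erase _ Λ (Finset.mem_univ a)]
      exact hsum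
    have t1 : (if a = b then (1:ℕ) else 0) = 0 := if_neg hab
    have t2 : (if a = a then (1:ℕ) else 0) = 1 := if_pos rfl
    have t3 : (if b = b then (1:ℕ) else 0) = 1 := if_pos rfl
    have t4 : (if b = a then (1:ℕ) else 0) = 0 := if_neg (Ne.symm hab)
    have hfa : f a = W Λ (n + 1) u * Λ a * (1 - (Λ b / Λ a) ^ ((ca - cb) + 1)) := by
      simp only [hf, t1, t2, eq_self_iff_true, if_true, add_zero]
      rw [if_pos (by omega : cb < ca + 1)]
      rw [show ca + 1 - cb = (ca - cb) + 1 by omega]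
    have hfb : f b = if 2 ≤ ca - cb then
        W Λ (n + 1) u * Λ b * (1 - (Λ b / Λ a) ^ ((ca - cb) - 1)) else 0 := by
      simp only [hf, t3, t4, eq_self_iff_true, if_true, add_zero]
      by_cases h2 : 2 ≤ ca - cb
      · rw [if_pos (by omega : cb + 1 < ca), if_pos h2]
        rw [show ca - (cb + 1) = (ca - cb) - 1 by omega]
      · rw [if_neg (by omega : ¬ cb + 1 < ca), if_neg h2]
    have hrest : ∑ c ∈ (Finset.univ.erase a).erase b, f c
        = (∑ c ∈ (Finset.univ.erase a).erase b, Λ c) * (W Λ (n + 1) u * (1 - (Λ b / Λ a) ^ (ca - cb))) := by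
      rw [Finset.sum_mul]
      apply Finset.sum_congr rfl
      intro c hc
      have hcb' : c ≠ b := (Finset.mem_erase.mp hc).1
      have hca' : c ≠ a := (Finset.mem_erase.mp (Finset.mem_erase.mp hc).2).1
      simp only [hf, if_neg hca', if_neg hcb', add_zero]
      rw [if_pos hk]
      ring
    rw [if_pos hg, hsplit, hfa, hfb, hrest, ht]
    set r : ℝ := ∑ c ∈ (Finset.univ.erase a).erase b, Λ c with hr
    set Wu := W Λ (n + 1) u with hWu
    set k := ca - cb with hkk
    have hk1 : 1 ≤ k := by omega
    obtain ⟨j, hj⟩ : ∃ j, k = j + 1 := ⟨k - 1, by omega⟩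
    rcases Nat.eq_zero_or_pos j with hj0 | hjpos
    · subst hj0
      rw [hj]
      rw [if_neg (by omega)]
      have := id1 (Λ a) (Λ b) r (hpos a) (by linarith [hΛsplit])
      rw [show (0:ℕ) + 1 + 1 = 2 from rfl, show (0:ℕ) + 1 = 1 from rfl, pow_one]
      linear_combination Wu * this
    · obtain ⟨i, hi⟩ : ∃ i, j = i + 1 := ⟨j - 1, by omega⟩
      subst hi
      rw [hj]
      rw [if_pos (by omega)]
      have e1 : i + 1 + 1 + 1 = i + 3 := by omega
      have e2 : i + 1 + 1 - 1 = i + 1 := by omega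
      rw [e1, e2]
      have := id2 (Λ a) (Λ b) r (hpos a) (by linarith [hΛsplit]) i
      linear_combination Wu * this

lemma GH_const (hpos : ∀ p, 0 < Λ p) (hsum : ∑ p, Λ p = 1) (a b : P) (hab : a ≠ b) (n : ℕ) :
    GH Λ a b (n + 1) = Λ a - Λ b := by
  induction n with
  | zero => exact GH_one Λ hpos a b hab
  | succ n ih => rw [GH_succ Λ hpos hsum a b hab n, ih]

lemma GH_le_G (hpos : ∀ p, 0 < Λ p) (a b : P) (n : ℕ) :
    GH Λ a b n ≤ G Λ a b n := by
  apply Finset.sum_le_sum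
  intro w _
  split
  · have hW : 0 ≤ W Λ n w := Finset.prod_nonneg (fun i _ => (hpos (w i)).le)
    have hρ : 0 ≤ (Λ b / Λ a) ^ ht a b n (ex a n w) :=
      pow_nonneg (div_nonneg (hpos b).le (hpos a).le) _
    nlinarith [mul_nonneg hW hρ]
  · exact le_refl 0

lemma G_ge (hpos : ∀ p, 0 < Λ p) (hsum : ∑ p, Λ p = 1) (a b : P) (hab : a ≠ b) (n : ℕ) :
    Λ a - Λ b ≤ G Λ a b (n + 1) := by
  rw [← GH_const Λ hpos hsum a b hab n]
  exact GH_le_G Λ hpos a b (n + 1)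

lemma bad_sum_le (hpos : ∀ p, 0 < Λ p) (hsum : ∑ p, Λ p = 1) (a b : P) (hab : a ≠ b) (n : ℕ) :
    ∑ w ∈ Finset.univ.filter (fun w : Fin (n + 1) → P => ¬ good a b (n + 1) (ex a (n + 1) w)),
      W Λ (n + 1) w ≤ 1 - (Λ a - Λ b) := by
  have h1 : ∑ w ∈ Finset.univ.filter (fun w : Fin (n + 1) → P => good a b (n + 1) (ex a (n + 1) w)),
        W Λ (n + 1) w
      + ∑ w ∈ Finset.univ.filter (fun w : Fin (n + 1) → P => ¬ good a b (n + 1) (ex a (n + 1) w)),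
        W Λ (n + 1) w = 1 := by
    rw [Finset.sum_filter_add_sum_filter_not]
    exact sum_W_eq_one Λ hsum (n + 1)
  have h2 : Λ a - Λ b ≤ ∑ w ∈ Finset.univ.filter
      (fun w : Fin (n + 1) → P => good a b (n + 1) (ex a (n + 1) w)), W Λ (n + 1) w := by
    have := G_ge Λ hpos hsum a b hab n
    rw [G] at this
    rw [Finset.sum_filter]
    exact this
  linarith

end Core

end Stmt5Aux


open Stmt5Aux in
/-- For a Bernoulli product measure on `P^ℕ` (P a finite alphabet) with strictly
positive marginals Λ, and symbols a ≠ b with Λ a > Λ b, the set of sequences in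
which a always strictly leads b in every initial segment has positive measure. -/
theorem stmt_5 (P : Type*) [Fintype P] [MeasurableSpace P]
    (Λ : P → ℝ) (hΛpos : ∀ p, 0 < Λ p) (hΛsum : ∑ p, Λ p = 1)
    (μ : Measure (ℕ → P)) [IsProbabilityMeasure μ]
    (hcyl : ∀ (s : Finset ℕ) (f : ℕ → P),
      μ {x | ∀ i ∈ s, x i = f i} = ∏ i ∈ s, ENNReal.ofReal (Λ (f i)))
    (a b : P) (hab : a ≠ b) (hfreq : Λ b < Λ a) :
    0 < μ {x | ∀ n : ℕ,
      ((range (n + 1)).filter (fun k => x k = b)).card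
        < ((range (n + 1)).filter (fun k => x k = a)).card} := by
  set E : Set (ℕ → P) := {x | ∀ n : ℕ,
      ((range (n + 1)).filter (fun k => x k = b)).card
        < ((range (n + 1)).filter (fun k => x k = a)).card} with hE
  set D : ℕ → Set (ℕ → P) := fun N => {x | ¬ good a b (N + 1) x} with hD
  have hDmono : Monotone D := by
    intro i j hij x hx hgood
    exact hx (fun m hm => hgood m (by omega))
  have hEc : Eᶜ = ⋃ N, D N := by
    ext x
    simp only [hE, hD, Set.mem_compl_iff, Set.mem_setOf_eq, Set.mem_iUnion, good, cnt]
    constructor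
    · intro hx
      push_neg at hx
      obtain ⟨n, hn⟩ := hx
      exact ⟨n, fun h => absurd (h n (by omega)) (not_lt.mpr hn)⟩
    · rintro ⟨N, hN⟩ hx
      exact hN (fun m _ => hx m)
  have hDbound : ∀ N, μ (D N) ≤ ENNReal.ofReal (1 - (Λ a - Λ b)) := by
    intro N
    set bad : Finset (Fin (N + 1) → P) :=
      Finset.univ.filter (fun w : Fin (N + 1) → P => ¬ good a b (N + 1) (ex a (N + 1) w)) with hbad
    have hsub : D N ⊆ ⋃ w ∈ bad, {x : ℕ → P | ∀ i ∈ Finset.range (N + 1), x i = ex a (N + 1) w i} := by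
      intro x hx
      set w : Fin (N + 1) → P := fun i => x i.1 with hw
      have hxw : ∀ i, i < N + 1 → ex a (N + 1) w i = x i := by
        intro i hi
        rw [ex_lt a w hi]
      have hwbad : w ∈ bad := by
        rw [hbad, Finset.mem_filter]
        refine ⟨Finset.mem_univ _, fun hgood => hx ?_⟩
        intro m hm
        rw [cnt_congr (x := x) (y := ex a (N + 1) w) (n := m + 1)
              (fun i hi => (hxw i (by omega)).symm) a,
            cnt_congr (x := x) (y := ex a (N + 1) w) (n := m + 1)
              (fun i hi => (hxw i (by omega)).symm) b]
        exact hgood m hm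
      exact Set.mem_biUnion hwbad (fun i hi => (hxw i (Finset.mem_range.mp hi)).symm)
    calc μ (D N) ≤ ∑ w ∈ bad, μ {x : ℕ → P | ∀ i ∈ Finset.range (N + 1), x i = ex a (N + 1) w i} :=
          (measure_mono hsub).trans (measure_biUnion_finset_le _ _)
      _ = ∑ w ∈ bad, ENNReal.ofReal (W Λ (N + 1) w) := by
          apply Finset.sum_congr rfl
          intro w _
          rw [hcyl (Finset.range (N + 1)) (ex a (N + 1) w)]
          rw [← ENNReal.ofReal_prod_of_nonneg (fun i _ => (hΛpos _).le)]
          congr 1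
          rw [W, ← Fin.prod_univ_eq_prod_range (fun i => Λ (ex a (N + 1) w i)) (N + 1)]
          apply Finset.prod_congr rfl
          intro i _
          rw [ex_lt a w i.2]
      _ = ENNReal.ofReal (∑ w ∈ bad, W Λ (N + 1) w) :=
          (ENNReal.ofReal_sum_of_nonneg
            (fun w _ => Finset.prod_nonneg (fun i _ => (hΛpos (w i)).le))).symm
      _ ≤ ENNReal.ofReal (1 - (Λ a - Λ b)) :=
          ENNReal.ofReal_le_ofReal (bad_sum_le Λ hΛpos hΛsum a b hab N)
  have hEcb : μ Eᶜ ≤ ENNReal.ofReal (1 - (Λ a - Λ b)) := by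
    rw [hEc, hDmono.measure_iUnion]
    exact iSup_le hDbound
  by_contra hle
  push_neg at hle
  have hE0 : μ E = 0 := le_antisymm hle zero_le
  have h1 : (1 : ENNReal) ≤ μ E + μ Eᶜ := by
    have := measure_union_le (μ := μ) E Eᶜ
    rw [Set.union_compl_self, measure_univ] at this
    exact this
  rw [hE0, zero_add] at h1
  have h2 : μ Eᶜ < 1 := lt_of_le_of_lt hEcb (ENNReal.ofReal_lt_one.mpr (by linarith))
  exact absurd (lt_of_le_of_lt h1 h2) (lt_irrefl _)
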